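/- arXiv:1401.2273 — 6 statements merged into one kernel-verified Lean document; each statement's English description precedes it below -/
import Mathlib

section
/- Let H be a subgroup of a group Γ. Suppose there is a retraction ρ : Γ → H (i.e., a homomorphism from Γ to H restricting to the identity on H), and suppose that for every nontrivial h ∈ H, the centralizer of h in Γ is contained in H. Then H is malnormal in Γ. -/
/-- If `H` is a retract of `Γ` and the centralizer of every nontrivial element of `H`
is contained in `H`, then `H` is malnormal in `Γ`. -/
theorem malnormal_of_retract_of_centralizer {Γ : Type*} [Group Γ] (H : Subgroup Γ)
    (ρ : Γ →* Γ) (hρran : ∀ g : Γ, ρ g ∈ H) (hρid : ∀ h ∈ H, ρ h = h)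
    (hcent : ∀ h ∈ H, h ≠ 1 → ∀ γ : Γ, γ * h = h * γ → γ ∈ H) :
    ∀ γ : Γ, γ ∉ H → ∀ x ∈ H, γ⁻¹ * x * γ ∈ H → x = 1 := by
  intro γ hγ x hx hxy
  by_contra hx1
  have h1 : (ρ γ)⁻¹ * x * ρ γ = γ⁻¹ * x * γ := by
    have := hρid _ hxy
    rwa [map_mul, map_mul, map_inv, hρid x hx] at this
  have key : (γ * (ρ γ)⁻¹) * x = x * (γ * (ρ γ)⁻¹) := by
    have h2 : γ * ((ρ γ)⁻¹ * x * ρ γ) = x * γ := by rw [h1]; group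
    calc (γ * (ρ γ)⁻¹) * x = γ * ((ρ γ)⁻¹ * x * ρ γ) * (ρ γ)⁻¹ := by group
      _ = x * (γ * (ρ γ)⁻¹) := by rw [h2]; group
  have hmem := hcent x hx hx1 _ key
  exact hγ (by simpa using H.mul_mem hmem (hρran γ))
end

section
/- A group G has a nontrivial finite quotient if and only if the free product G * G * G is large, where a group is large if it has a finite-index subgroup that surjects onto a non-abelian free group. -/
open SemidirectProduct

/-- A group `L` is large if it has a finite-index subgroup surjecting onto a
non-abelian free group. -/
def IsLarge (L : Type*) [Group L] : Prop :=
  ∃ K : Subgroup L, K.FiniteIndex ∧ ∃ f : K →* FreeGroup (Fin 2), Function.Surjective f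

section Aux

/-- From a homomorphism to a finite group that is nontrivial on some element, produce
a nontrivial finite quotient. -/
lemma exists_quotient_of_hom {G : Type} [Group G] {Qf : Type} [Group Qf] [Finite Qf]
    (h : G →* Qf) (g : G) (hg : h g ≠ 1) :
    ∃ (Q : Type) (_ : Group Q) (_ : Finite Q) (_ : Nontrivial Q) (f : G →* Q),
      Function.Surjective f := by
  refine ⟨h.range, inferInstance, inferInstance, ?_, h.rangeRestrict,
    h.rangeRestrict_surjective⟩
  refine ⟨⟨h.rangeRestrict g, 1, fun he => hg ?_⟩⟩
  simpa using congrArg Subtype.val he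

end Aux

section Forward

variable {Q : Type} [Group Q]

/-- The free group on which `Q` will act. -/
abbrev FQ (Q : Type) [Group Q] : Type := FreeGroup (Fin 2 × {q : Q // q ≠ 1})

open Classical in
/-- Generators of `FQ Q`, with the convention `cgen j 1 = 1`. -/
noncomputable def cgen (j : Fin 2) (q : Q) : FQ Q :=
  if h : q = 1 then 1 else FreeGroup.of (j, ⟨q, h⟩)

lemma cgen_one (j : Fin 2) : cgen (Q := Q) j 1 = 1 := dif_pos rfl

lemma cgen_ne (j : Fin 2) {q : Q} (h : q ≠ 1) : cgen j q = FreeGroup.of (j, ⟨q, h⟩) :=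
  dif_neg h

lemma of_eq_cgen (p : Fin 2 × {q : Q // q ≠ 1}) : FreeGroup.of p = cgen p.1 p.2.1 := by
  rw [cgen_ne p.1 p.2.2]

/-- The endomorphism of `FQ Q` corresponding to the action of `a : Q`. -/
noncomputable def Eend (a : Q) : FQ Q →* FQ Q :=
  FreeGroup.lift (fun p => (cgen p.1 a)⁻¹ * cgen p.1 (a * p.2.1))

lemma Eend_cgen (a : Q) (j : Fin 2) (q : Q) :
    Eend a (cgen j q) = (cgen j a)⁻¹ * cgen j (a * q) := by
  by_cases h : q = 1
  · subst h
    rw [cgen_one, map_one, mul_one, inv_mul_cancel]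
  · rw [cgen_ne j h]
    exact FreeGroup.lift_apply_of

lemma Eend_comp (a b : Q) (x : FQ Q) : Eend a (Eend b x) = Eend (a * b) x := by
  have h : ((Eend a).comp (Eend b) : FQ Q →* FQ Q) = Eend (a * b) := by
    refine FreeGroup.ext_hom _ _ fun p => ?_
    simp only [MonoidHom.comp_apply, of_eq_cgen, Eend_cgen, map_mul, map_inv, mul_assoc]
    group
  calc Eend a (Eend b x) = ((Eend a).comp (Eend b)) x := rfl
    _ = Eend (a * b) x := by rw [h]

lemma Eend_one (x : FQ Q) : Eend (1 : Q) x = x := by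
  have h : (Eend (1 : Q) : FQ Q →* FQ Q) = MonoidHom.id _ := by
    refine FreeGroup.ext_hom _ _ fun p => ?_
    rw [of_eq_cgen, Eend_cgen, cgen_one, inv_one, one_mul, one_mul, MonoidHom.id_apply]
  rw [h, MonoidHom.id_apply]

/-- The action of `Q` on `FQ Q` by automorphisms. -/
noncomputable def rho : Q →* MulAut (FQ Q) where
  toFun a :=
    { toFun := Eend a
      invFun := Eend a⁻¹
      left_inv := fun x => by rw [Eend_comp, inv_mul_cancel, Eend_one]
      right_inv := fun x => by rw [Eend_comp, mul_inv_cancel, Eend_one]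
      map_mul' := map_mul (Eend a) }
  map_one' := by
    ext x
    exact Eend_one x
  map_mul' a b := by
    ext x
    exact (Eend_comp a b x).symm

lemma rho_apply (a : Q) (x : FQ Q) : rho a x = Eend a x := rfl

/-- The twisted copy of `Q` inside `FQ Q ⋊[rho] Q`. -/
noncomputable def tcop (j : Fin 2) : Q →* FQ Q ⋊[rho] Q where
  toFun q := ⟨cgen j q, q⟩
  map_one' := by
    refine SemidirectProduct.ext ?_ rfl
    exact cgen_one j
  map_mul' q q' := by
    refine SemidirectProduct.ext ?_ rfl
    show cgen j (q * q') = cgen j q * rho q (cgen j q')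
    rw [rho_apply, Eend_cgen, ← mul_assoc, mul_inv_cancel, one_mul]

lemma tcop_left (j : Fin 2) (q : Q) : (tcop j q).left = cgen j q := rfl

lemma tcop_right (j : Fin 2) (q : Q) : (tcop j q).right = q := rfl

variable {G : Type} [Group G]

/-- The main homomorphism from `G * G * G` to the semidirect product. -/
noncomputable def Phi (π : G →* Q) :
    Monoid.CoprodI (fun _ : Fin 3 => G) →* FQ Q ⋊[rho] Q :=
  Monoid.CoprodI.lift (fun i =>
    (![(SemidirectProduct.inr : Q →* FQ Q ⋊[rho] Q), tcop 0, tcop 1] i).comp π)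

lemma Phi_of (π : G →* Q) (i : Fin 3) (g : G) :
    Phi π (Monoid.CoprodI.of (i := i) g) =
      ![(SemidirectProduct.inr : Q →* FQ Q ⋊[rho] Q), tcop 0, tcop 1] i (π g) := by
  rw [Phi, Monoid.CoprodI.lift_of, MonoidHom.comp_apply]

/-- Restriction of `Phi` to the kernel of the projection to `Q`, landing in `FQ Q`. -/
noncomputable def psi (π : G →* Q) :
    ((SemidirectProduct.rightHom.comp (Phi π)).ker) →* FQ Q where
  toFun k := (Phi π (k : Monoid.CoprodI (fun _ : Fin 3 => G))).left
  map_one' := by simp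
  map_mul' k k' := by
    have hk : (Phi π (k : Monoid.CoprodI (fun _ : Fin 3 => G))).right = 1 :=
      MonoidHom.mem_ker.mp k.2
    show (Phi π ((k : Monoid.CoprodI (fun _ : Fin 3 => G)) *
        (k' : Monoid.CoprodI (fun _ : Fin 3 => G)))).left = _
    rw [map_mul, mul_left, hk, map_one]
    rfl

lemma isLarge_of_quotient [Finite Q] [Nontrivial Q] (π : G →* Q)
    (hπ : Function.Surjective π) :
    IsLarge (Monoid.CoprodI (fun _ : Fin 3 => G)) := by
  refine ⟨(SemidirectProduct.rightHom.comp (Phi π)).ker, Subgroup.finiteIndex_ker _,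
    (FreeGroup.map Prod.fst).comp (psi π), ?_⟩
  intro w
  have hle : Subgroup.closure (Set.range (FreeGroup.of : Fin 2 → FreeGroup (Fin 2))) ≤
      ((FreeGroup.map Prod.fst).comp (psi π)).range := by
    rw [Subgroup.closure_le]
    rintro _ ⟨j, rfl⟩
    obtain ⟨q₀, hq₀⟩ := exists_ne (1 : Q)
    obtain ⟨g₀, rfl⟩ := hπ q₀
    have h1 : Phi π (Monoid.CoprodI.of (i := j.succ) g₀) = tcop j (π g₀) := by
      rw [Phi_of]
      fin_cases j <;> rfl
    have h0 : Phi π (Monoid.CoprodI.of (i := (0 : Fin 3)) g₀) =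
        SemidirectProduct.inr (π g₀) := by
      rw [Phi_of]
      rfl
    have hval : Phi π (Monoid.CoprodI.of (i := j.succ) g₀ *
        (Monoid.CoprodI.of (i := (0 : Fin 3)) g₀)⁻¹) =
        tcop j (π g₀) * (SemidirectProduct.inr (π g₀))⁻¹ := by
      rw [map_mul, map_inv, h1, h0]
    have hmem : Monoid.CoprodI.of (i := j.succ) g₀ *
        (Monoid.CoprodI.of (i := (0 : Fin 3)) g₀)⁻¹ ∈
        (SemidirectProduct.rightHom.comp (Phi π)).ker := by
      rw [MonoidHom.mem_ker, MonoidHom.comp_apply, hval, map_mul, map_inv, rightHom_inr]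
      show (tcop j (π g₀)).right * (π g₀)⁻¹ = 1
      rw [tcop_right, mul_inv_cancel]
    refine ⟨⟨_, hmem⟩, ?_⟩
    show FreeGroup.map Prod.fst (psi π ⟨_, hmem⟩) = FreeGroup.of j
    have hpsi : psi π ⟨_, hmem⟩ = cgen j (π g₀) := by
      show (Phi π (Monoid.CoprodI.of (i := j.succ) g₀ *
        (Monoid.CoprodI.of (i := (0 : Fin 3)) g₀)⁻¹)).left = cgen j (π g₀)
      rw [hval, mul_left, ← map_inv, left_inr, map_one, mul_one, tcop_left]
    rw [hpsi, cgen_ne j hq₀, FreeGroup.map.of]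
  have hw : w ∈ ((FreeGroup.map Prod.fst).comp (psi π)).range := by
    apply hle
    rw [FreeGroup.closure_range_of]
    exact Subgroup.mem_top w
  exact hw

end Forward

/-- A group `G` has a nontrivial finite quotient if and only if `G * G * G` is large. -/
theorem nontrivial_finite_quotient_iff_large_triple (G : Type) [Group G] :
    (∃ (Q : Type) (_ : Group Q) (_ : Finite Q) (_ : Nontrivial Q) (f : G →* Q),
      Function.Surjective f) ↔
    IsLarge (Monoid.CoprodI (fun _ : Fin 3 => G)) := by
  constructor
  · rintro ⟨Q, hQg, hQf, hQnt, π, hπ⟩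
    exact isLarge_of_quotient π hπ
  · rintro ⟨K, hK, f, hf⟩
    haveI : K.FiniteIndex := hK
    by_cases hall : ∀ (i : Fin 3) (g : G),
        QuotientGroup.mk' K.normalCore (Monoid.CoprodI.of (i := i) g) = 1
    · -- all copies die in the core quotient, so `K = ⊤` and the free group is a
      -- quotient of `G * G * G` itself
      have hcore : K.normalCore = ⊤ := by
        have h1 : QuotientGroup.mk' K.normalCore =
            (1 : Monoid.CoprodI (fun _ : Fin 3 => G) →* _) :=
          Monoid.CoprodI.ext_hom _ _ fun i => MonoidHom.ext fun g => (hall i g).trans rfl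
        rw [eq_top_iff]
        intro x _
        have hx : QuotientGroup.mk' K.normalCore x = 1 := by rw [h1]; rfl
        exact QuotientGroup.ker_mk' K.normalCore ▸
          (MonoidHom.mem_ker.mpr hx)
      have hKtop : K = ⊤ := top_le_iff.mp (hcore ▸ K.normalCore_le)
      -- corestriction of the identity to `K`
      let e : Monoid.CoprodI (fun _ : Fin 3 => G) →* K :=
        MonoidHom.codRestrict (MonoidHom.id _) K (fun x => by rw [hKtop]; trivial)
      have he : Function.Surjective e := by
        intro k
        refine ⟨(k : Monoid.CoprodI _), ?_⟩
        exact Subtype.ext rfl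
      let β : FreeGroup (Fin 2) →* Multiplicative ℤ :=
        FreeGroup.lift fun _ => Multiplicative.ofAdd (1 : ℤ)
      have hβ : Function.Surjective β := by
        intro n
        refine ⟨FreeGroup.of 0 ^ Multiplicative.toAdd n, ?_⟩
        rw [map_zpow, FreeGroup.lift_apply_of, ← ofAdd_zsmul, smul_eq_mul, mul_one, ofAdd_toAdd]
      let H : Monoid.CoprodI (fun _ : Fin 3 => G) →* Multiplicative ℤ := β.comp (f.comp e)
      have hH : Function.Surjective H := hβ.comp (hf.comp he)
      have hex : ∃ (i : Fin 3) (g : G), H (Monoid.CoprodI.of (i := i) g) ≠ 1 := by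
        by_contra hno
        push_neg at hno
        have h1 : H = 1 :=
          Monoid.CoprodI.ext_hom _ _ fun i => MonoidHom.ext fun g => (hno i g).trans rfl
        obtain ⟨x, hx⟩ := hH (Multiplicative.ofAdd 1)
        rw [h1] at hx
        have h2 := congrArg Multiplicative.toAdd hx
        simp at h2
      obtain ⟨i, g, hg⟩ := hex
      set m : ℤ := Multiplicative.toAdd (H (Monoid.CoprodI.of (i := i) g)) with hm_def
      have hm : m ≠ 0 := by
        intro h
        apply hg
        rw [← ofAdd_toAdd (H (Monoid.CoprodI.of (i := i) g)), ← hm_def, h, ofAdd_zero]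
      set n : ℕ := 2 * m.natAbs with hn_def
      haveI : NeZero n := ⟨Nat.mul_ne_zero two_ne_zero (Int.natAbs_ne_zero.mpr hm)⟩
      let ch : Multiplicative ℤ →* Multiplicative (ZMod n) :=
        AddMonoidHom.toMultiplicative (Int.castAddHom (ZMod n))
      refine exists_quotient_of_hom
        (ch.comp (H.comp (Monoid.CoprodI.of (M := fun _ : Fin 3 => G) (i := i)))) g ?_
      intro hone
      have h2 : ((m : ℤ) : ZMod n) = 0 := by
        have h3 := congrArg Multiplicative.toAdd hone
        simpa [ch] using h3
      have hdvd : (n : ℤ) ∣ m := (ZMod.intCast_zmod_eq_zero_iff_dvd m n).mp h2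
      have hdvd2 : n ∣ m.natAbs := Int.ofNat_dvd_right.mp (Int.dvd_natAbs.mpr hdvd)
      have hle2 : n ≤ m.natAbs := Nat.le_of_dvd (Nat.pos_of_ne_zero
        (Int.natAbs_ne_zero.mpr hm)) hdvd2
      have : m.natAbs ≠ 0 := Int.natAbs_ne_zero.mpr hm
      omega
    · -- some copy survives in the finite quotient by the normal core
      push_neg at hall
      obtain ⟨i, g, hg⟩ := hall
      exact exists_quotient_of_hom
        ((QuotientGroup.mk' K.normalCore).comp (Monoid.CoprodI.of (M := fun _ : Fin 3 => G) (i := i))) g hg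
end

section
/- If a group G admits a surjective homomorphism onto a nontrivial finite group Q, then the free product G * G * G admits a finite-index subgroup that surjects onto a non-abelian free group. -/
open Monoid

namespace LargeTripleAux

variable (Q : Type) [Group Q]

abbrev Fr := FreeGroup (Fin 2)
abbrev M (Q : Type) := Q → Fr

/-- Shift automorphism of `Q → Fr` by left translation. -/
def shift (q : Q) : M Q ≃* M Q where
  toFun m r := m (q⁻¹ * r)
  invFun m r := m (q * r)
  left_inv m := by funext r; simp
  right_inv m := by funext r; simp
  map_mul' m n := rfl

def φ : Q →* MulAut (M Q) where
  toFun := shift Q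
  map_one' := by ext m r; simp [shift]
  map_mul' a b := by ext m r; simp [shift, mul_assoc]

open scoped Classical in
/-- The cocycle `q ↦ w·δ_q − w·δ_1` (multiplicatively). -/
noncomputable def sigma (w : Fr) (q : Q) : M Q :=
  fun r => (if r = q then w else 1) * (if r = 1 then w⁻¹ else 1)

lemma sigma_cocycle (w : Fr) (a b : Q) :
    sigma Q w (a * b) = sigma Q w a * (φ Q a) (sigma Q w b) := by
  classical
  funext r
  have h1 : ∀ x : Q, (a⁻¹ * r = x) = (r = a * x) := by
    intro x; rw [eq_iff_iff, inv_mul_eq_iff_eq_mul]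
  simp only [sigma, φ, shift, Pi.mul_apply, MonoidHom.coe_mk, OneHom.coe_mk,
    MulEquiv.coe_mk, Equiv.coe_fn_mk, h1, mul_one]
  split_ifs <;> group

lemma sigma_one (q : Q) : sigma Q 1 q = 1 := by
  classical
  funext r
  simp [sigma]

lemma sigma_apply_one (w : Fr) : sigma Q w 1 = 1 := by
  classical
  funext r
  simp only [sigma, Pi.one_apply]
  split_ifs <;> group



variable {G : Type} [Group G]

/-- The homomorphism `G →* (Q → Fr) ⋊ Q` twisted by the cocycle for letter `w`. -/
noncomputable def cochom (f : G →* Q) (w : Fr) : G →* (M Q ⋊[φ Q] Q) where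
  toFun g := ⟨sigma Q w (f g), f g⟩
  map_one' := by
    apply SemidirectProduct.ext
    · show sigma Q w (f 1) = (1 : M Q ⋊[φ Q] Q).left
      rw [map_one, sigma_apply_one]; rfl
    · show f 1 = (1 : M Q ⋊[φ Q] Q).right
      simp
  map_mul' a b := by
    apply SemidirectProduct.ext
    · show sigma Q w (f (a * b)) = _
      rw [map_mul, sigma_cocycle]; rfl
    · show f (a * b) = _
      rw [map_mul]; rfl

@[simp] lemma cochom_right (f : G →* Q) (w : Fr) (g : G) :
    (cochom Q f w g).right = f g := rfl

@[simp] lemma cochom_left (f : G →* Q) (w : Fr) (g : G) :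
    (cochom Q f w g).left = sigma Q w (f g) := rfl

noncomputable def letters : Fin 3 → Fr := ![1, FreeGroup.of 0, FreeGroup.of 1]

noncomputable def Φ (f : G →* Q) :
    Monoid.CoprodI (fun _ : Fin 3 => G) →* (M Q ⋊[φ Q] Q) :=
  Monoid.CoprodI.lift (fun i => cochom Q f (letters i))

noncomputable def bigK (f : G →* Q) : Subgroup (Monoid.CoprodI (fun _ : Fin 3 => G)) :=
  (SemidirectProduct.rightHom.comp (Φ Q f)).ker

lemma mem_bigK {f : G →* Q} {p : Monoid.CoprodI (fun _ : Fin 3 => G)}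
    (hp : p ∈ bigK Q f) : ((Φ Q f) p).right = 1 := hp

/-- Projection of the kernel to the free group, evaluating the cocycle part at `1 ∈ Q`. -/
noncomputable def projK (f : G →* Q) : (bigK Q f) →* Fr where
  toFun k := ((Φ Q f) k.1).left 1
  map_one' := by simp
  map_mul' k l := by
    have hk : ((Φ Q f) k.1).right = 1 := mem_bigK Q k.2
    show ((Φ Q f) (k.1 * l.1)).left 1 = _
    rw [map_mul, SemidirectProduct.mul_left, hk, map_one]
    simp

lemma projK_surjective (f : G →* Q) (hf : Function.Surjective f) [Nontrivial Q] :
    Function.Surjective (projK Q f) := by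
  classical
  obtain ⟨q, hq⟩ := exists_ne (1 : Q)
  obtain ⟨g₀, hg₀⟩ := hf q
  rw [← MonoidHom.range_eq_top, ← top_le_iff, ← FreeGroup.closure_range_of (Fin 2),
    Subgroup.closure_le]
  rintro x ⟨i, rfl⟩
  set u : Monoid.CoprodI (fun _ : Fin 3 => G) :=
    Monoid.CoprodI.of (i := i.succ) g₀ * (Monoid.CoprodI.of (i := (0 : Fin 3)) g₀)⁻¹ with hu_def
  have hΦof : ∀ (j : Fin 3), (Φ Q f) (Monoid.CoprodI.of (i := j) g₀) = cochom Q f (letters j) g₀ :=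
    fun j => Monoid.CoprodI.lift_of _ _
  have hu : u ∈ bigK Q f := by
    show ((SemidirectProduct.rightHom.comp (Φ Q f))) u = 1
    simp [hu_def, hΦof]
  have hletters : letters i.succ = FreeGroup.of i := by
    fin_cases i <;> rfl
  have hletters0 : letters (0 : Fin 3) = 1 := rfl
  have hval : projK Q f ⟨u, hu⟩ = (FreeGroup.of i)⁻¹ := by
    show ((Φ Q f) u).left 1 = _
    rw [hu_def, map_mul, map_inv, hΦof, hΦof, hletters, hletters0]
    have hb : cochom Q f (1 : Fr) g₀ = ⟨1, q⟩ := by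
      apply SemidirectProduct.ext
      · show sigma Q 1 (f g₀) = _
        rw [sigma_one]
      · show f g₀ = q
        exact hg₀
    rw [hb, SemidirectProduct.mul_left, SemidirectProduct.inv_left]
    simp only [inv_one, map_one, mul_one, cochom_left, hg₀]
    simp only [sigma, Pi.mul_apply]
    simp only [if_pos rfl, if_neg (fun h : (1 : Q) = q => hq h.symm), one_mul, if_true]
  exact ⟨(⟨u, hu⟩ : bigK Q f)⁻¹, by rw [map_inv, hval, inv_inv]⟩

end LargeTripleAux

/-- If a group `G` surjects onto a nontrivial finite group `Q`, then the free
product `G * G * G` has a finite-index subgroup surjecting onto a non-abelian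
free group. -/
theorem large_triple_of_finite_quotient (G : Type) [Group G] (Q : Type) [Group Q]
    [Finite Q] [Nontrivial Q] (f : G →* Q) (hf : Function.Surjective f) :
    ∃ K : Subgroup (Monoid.CoprodI (fun _ : Fin 3 => G)), K.FiniteIndex ∧
      ∃ g : K →* FreeGroup (Fin 2), Function.Surjective g :=
  ⟨LargeTripleAux.bigK Q f, Subgroup.finiteIndex_ker _,
    LargeTripleAux.projK Q f, LargeTripleAux.projK_surjective Q f hf⟩
end

section
/- Let A be a finite group, B ≤ A a subgroup, and consider the subgroup H = ⟨B, t⟩ of the free product Γ = A * ⟨t⟩ where ⟨t⟩ is infinite cyclic. Then H is isomorphic to B * ⟨t⟩ and is almost malnormal in Γ. -/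
open Monoid
namespace AMN

abbrev Fct (M N : Type) : Bool → Type := fun b => match b with | false => M | true => N

instance (M N : Type) [Group M] [Group N] : ∀ b, Group (Fct M N b) := fun b =>
  match b with
  | false => ‹Group M›
  | true => ‹Group N›

section EquivI

variable {M N : Type} [Group M] [Group N]

def toI : Coprod M N →* CoprodI (Fct M N) :=
  Coprod.lift (CoprodI.of (M := Fct M N) (i := false)) (CoprodI.of (M := Fct M N) (i := true))

def fromI : CoprodI (Fct M N) →* Coprod M N :=
  CoprodI.lift (fun b => match b with
    | false => Coprod.inl
    | true => Coprod.inr)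

lemma toI_inl (x : M) : (toI (Coprod.inl x) : CoprodI (Fct M N)) =
    CoprodI.of (M := Fct M N) (i := false) x :=
  Coprod.lift_apply_inl _ _ _

lemma toI_inr (x : N) : (toI (Coprod.inr x) : CoprodI (Fct M N)) =
    CoprodI.of (M := Fct M N) (i := true) x :=
  Coprod.lift_apply_inr _ _ _

def coprodEquivCoprodI : Coprod M N ≃* CoprodI (Fct M N) :=
  MonoidHom.toMulEquiv toI fromI
    (by
      apply Coprod.hom_ext <;> ext x
      · show fromI (toI (Coprod.inl x) : CoprodI (Fct M N)) = Coprod.inl x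
        rw [toI_inl, fromI]
        exact CoprodI.lift_of _ _
      · show fromI (toI (Coprod.inr x) : CoprodI (Fct M N)) = Coprod.inr x
        rw [toI_inr, fromI]
        exact CoprodI.lift_of _ _)
    (by
      apply CoprodI.ext_hom
      intro b
      cases b <;> ext x
      · show toI (fromI (CoprodI.of x)) = CoprodI.of x
        rw [fromI, CoprodI.lift_of]
        exact toI_inl x
      · show toI (fromI (CoprodI.of x)) = CoprodI.of x
        rw [fromI, CoprodI.lift_of]
        exact toI_inr x)

@[simp] lemma coprodEquivCoprodI_inl (x : M) :
    (coprodEquivCoprodI (Coprod.inl x) : CoprodI (Fct M N)) =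
      CoprodI.of (M := Fct M N) (i := false) x :=
  toI_inl x

@[simp] lemma coprodEquivCoprodI_inr (x : N) :
    (coprodEquivCoprodI (Coprod.inr x) : CoprodI (Fct M N)) =
      CoprodI.of (M := Fct M N) (i := true) x :=
  toI_inr x

end EquivI

section Words

variable {A : Type} [Group A]

abbrev F := FreeGroup Unit

abbrev G (A : Type) := Fct A F

abbrev Λ (A : Type) [Group A] := CoprodI (G A)

abbrev Letter (A : Type) := Σ b, G A b

noncomputable instance : ∀ b, DecidableEq (G A b) := fun _ => Classical.decEq _

/-- Reduced list. -/
def Red (L : List (Letter A)) : Prop :=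
  (∀ l ∈ L, l.2 ≠ 1) ∧ L.Chain' (fun l l' => l.1 ≠ l'.1)

def prodL (L : List (Letter A)) : Λ A := (L.map fun l => CoprodI.of l.2).prod

def wordOf (L : List (Letter A)) (h : Red L) : CoprodI.Word (G A) := ⟨L, h.1, h.2⟩

lemma equiv_toList (L : List (Letter A)) (h : Red L) :
    (CoprodI.Word.equiv (prodL L)).toList = L := by
  have : prodL L = CoprodI.Word.equiv.symm (wordOf L h) := rfl
  rw [this, Equiv.apply_symm_apply, wordOf]

lemma red_toList (x : Λ A) : Red (CoprodI.Word.equiv x).toList :=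
  ⟨(CoprodI.Word.equiv x).ne_one, (CoprodI.Word.equiv x).chain_ne⟩

lemma prodL_toList (x : Λ A) : prodL (CoprodI.Word.equiv x).toList = x := by
  have : prodL (CoprodI.Word.equiv x).toList = (CoprodI.Word.equiv x).prod := rfl
  rw [this]
  exact CoprodI.Word.equiv.symm_apply_apply x

@[simp] lemma prodL_nil : prodL ([] : List (Letter A)) = 1 := rfl

@[simp] lemma prodL_cons (l : Letter A) (L : List (Letter A)) :
    prodL (l :: L) = CoprodI.of l.2 * prodL L := by
  simp [prodL]

@[simp] lemma prodL_append (L L' : List (Letter A)) :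
    prodL (L ++ L') = prodL L * prodL L' := by
  simp [prodL]

/-- letterwise inverse + reversal -/
def linv (l : Letter A) : Letter A := ⟨l.1, l.2⁻¹⟩

def revInv (L : List (Letter A)) : List (Letter A) := (L.map linv).reverse

lemma red_revInv {L : List (Letter A)} (h : Red L) : Red (revInv L) := by
  constructor
  · intro l hl
    simp only [revInv, List.mem_reverse, List.mem_map] at hl
    obtain ⟨l', hl', rfl⟩ := hl
    exact inv_ne_one.2 (h.1 l' hl')
  · unfold List.Chain'
    rw [revInv, List.isChain_reverse]
    refine (List.isChain_map _).2 ?_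
    exact h.2.imp (fun a b hab => by simp [linv, flip]; exact fun e => (hab e.symm))

lemma revInv_cons (l : Letter A) (L : List (Letter A)) :
    revInv (l :: L) = revInv L ++ [linv l] := by
  simp [revInv]

lemma prodL_revInv (L : List (Letter A)) : prodL (revInv L) = (prodL L)⁻¹ := by
  induction L with
  | nil => simp [revInv]
  | cons l L ih =>
    rw [revInv_cons, prodL_append, ih, prodL_cons]
    simp [linv, prodL, mul_comm]
    exact map_inv (CoprodI.of (M := G A) (i := l.1)) l.2

@[simp] lemma linv_fst (l : Letter A) : (linv l).1 = l.1 := rfl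

lemma revInv_head? (L : List (Letter A)) : (revInv L).head? = L.getLast?.map linv := by
  rw [revInv, List.head?_reverse, List.getLast?_map]

lemma revInv_getLast? (L : List (Letter A)) : (revInv L).getLast? = L.head?.map linv := by
  rw [revInv, List.getLast?_reverse, List.head?_map]

lemma mem_revInv {l : Letter A} {L : List (Letter A)} :
    l ∈ revInv L ↔ ∃ l' ∈ L, l = linv l' := by
  simp [revInv, eq_comm]

end Words

section Psi

variable {A : Type} [Group A] (B : Subgroup A)

def goodL : Letter A → Prop := fun l =>
  match l with
  | ⟨false, a⟩ => a ∈ B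
  | ⟨true, _⟩ => True

@[simp] lemma goodL_true (f : F) : goodL B (⟨true, f⟩ : Letter A) := trivial

@[simp] lemma goodL_false (a : A) : goodL B (⟨false, a⟩ : Letter A) ↔ a ∈ B := Iff.rfl

lemma goodL_linv {l : Letter A} (h : goodL B l) : goodL B (linv l) := by
  obtain ⟨b, m⟩ := l
  cases b
  · exact inv_mem h
  · trivial

def fmap : ∀ b, Fct ↥B F b →* G A b := fun b =>
  match b with
  | false => B.subtype
  | true => MonoidHom.id F

lemma fmap_injective : ∀ b, Function.Injective (fmap B b) := fun b =>
  match b with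
  | false => B.subtype_injective
  | true => fun _ _ h => h

def mapL : Letter ↥B → Letter A := fun l => ⟨l.1, fmap B l.1 l.2⟩

@[simp] lemma mapL_fst (l : Letter ↥B) : (mapL B l).1 = l.1 := rfl

lemma goodL_mapL (l : Letter ↥B) : goodL B (mapL B l) := by
  obtain ⟨b, m⟩ := l
  cases b
  · exact m.2
  · trivial

noncomputable def ψ : Λ ↥B →* Λ A :=
  CoprodI.lift (fun b => (CoprodI.of (M := G A) (i := b)).comp (fmap B b))

lemma ψ_of {b : Bool} (m : Fct ↥B F b) :
    ψ B (CoprodI.of m) = CoprodI.of (M := G A) (i := b) (fmap B b m) :=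
  CoprodI.lift_of _ _

lemma red_mapL {L : List (Letter ↥B)} (h : Red L) : Red (L.map (mapL B)) := by
  constructor
  · intro l hl
    obtain ⟨l', hl', rfl⟩ := List.mem_map.1 hl
    obtain ⟨b, m⟩ := l'
    intro hm
    exact h.1 _ hl' (fmap_injective B b (by rw [map_one]; exact hm))
  · refine (List.isChain_map _).2 (h.2.imp ?_)
    intro a b hab
    simpa using hab

lemma ψ_prodL (L : List (Letter ↥B)) : ψ B (prodL L) = prodL (L.map (mapL B)) := by
  induction L with
  | nil => simp
  | cons l L ih =>
    rw [prodL_cons, map_mul, ih, List.map_cons, prodL_cons, ψ_of]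
    rfl

noncomputable def HΛ : Subgroup (Λ A) := (ψ B).range

lemma mem_HΛ_iff {x : Λ A} :
    x ∈ HΛ B ↔ ∀ l ∈ (CoprodI.Word.equiv x).toList, goodL B l := by
  constructor
  · rintro ⟨u, rfl⟩
    have h1 : ψ B u = prodL ((CoprodI.Word.equiv u).toList.map (mapL B)) := by
      rw [← ψ_prodL, prodL_toList]
    rw [h1, equiv_toList _ (red_mapL B (red_toList u))]
    intro l hl
    obtain ⟨l', _, rfl⟩ := List.mem_map.1 hl
    exact goodL_mapL B l'
  · intro hgood
    rw [← prodL_toList x]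
    revert hgood
    generalize (CoprodI.Word.equiv x).toList = L
    intro hgood
    induction L with
    | nil => exact one_mem _
    | cons l L ih =>
      rw [prodL_cons]
      refine mul_mem ?_ (ih (fun l' hl' => hgood l' (List.mem_cons_of_mem _ hl')))
      obtain ⟨b, m⟩ := l
      have hg := hgood _ (List.mem_cons_self)
      cases b
      · exact ⟨CoprodI.of (M := Fct ↥B F) (i := false) ⟨m, hg⟩, ψ_of B _⟩
      · exact ⟨CoprodI.of (M := Fct ↥B F) (i := true) m, ψ_of B _⟩

lemma ψ_injective : Function.Injective (ψ B) := by
  rw [injective_iff_map_eq_one]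
  intro u hu
  have h1 : ψ B u = prodL ((CoprodI.Word.equiv u).toList.map (mapL B)) := by
    rw [← ψ_prodL, prodL_toList]
  have h2 : ((CoprodI.Word.equiv (ψ B u)).toList) = (CoprodI.Word.equiv u).toList.map (mapL B) := by
    rw [h1]
    exact equiv_toList _ (red_mapL B (red_toList u))
  rw [hu] at h2
  have h3 : (CoprodI.Word.equiv (1 : Λ A)).toList = [] := by
    have := equiv_toList ([] : List (Letter A)) ⟨by simp, List.isChain_nil⟩
    simpa using this
  rw [h3] at h2
  have h4 : (CoprodI.Word.equiv u).toList = [] := by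
    simpa using h2.symm
  rw [← prodL_toList u, h4, prodL_nil]

end Psi

section Core

variable {A : Type} [Group A] {B : Subgroup A}

lemma leftMul (a : A) (ha1 : a ≠ 1) (haB : a ∉ B) (L : List (Letter A)) (hR : Red L)
    (hhead : ∀ l ∈ L.head?, goodL B l) :
    ∃ (b : A) (T : List (Letter A)), b ∉ B ∧ Red ((⟨false, b⟩ : Letter A) :: T) ∧
      prodL ((⟨false, b⟩ : Letter A) :: T) = CoprodI.of (M := G A) (i := false) a * prodL L ∧
      (T = L ∨ (T = L.tail ∧ ∃ m : A, L.head? = some ⟨false, m⟩)) := by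
  match L with
  | [] =>
    refine ⟨a, [], haB, ⟨?_, ?_⟩, by simp, Or.inl rfl⟩
    · intro l hl
      simp at hl
      subst hl
      exact ha1
    · exact List.isChain_singleton _
  | ⟨false, m⟩ :: L' =>
    have hm : m ∈ B := hhead ⟨false, m⟩ (by simp)
    have hb1 : a * m ≠ 1 := fun h => haB (by
      have : a = m⁻¹ := by rw [eq_inv_iff_mul_eq_one]; exact h
      rw [this]; exact inv_mem hm)
    have hbB : a * m ∉ B := fun h => haB (by
      have : a = (a * m) * m⁻¹ := by group
      rw [this]; exact mul_mem h (inv_mem hm))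
    refine ⟨a * m, L', hbB, ⟨?_, ?_⟩, ?_, Or.inr ⟨rfl, m, rfl⟩⟩
    · intro l hl
      rcases List.mem_cons.1 hl with h | h
      · subst h; exact hb1
      · exact hR.1 _ (List.mem_cons_of_mem _ h)
    · unfold List.Chain'
      rw [List.isChain_cons]
      refine ⟨?_, (List.isChain_cons.1 hR.2).2⟩
      intro h hh
      exact (List.isChain_cons.1 hR.2).1 h hh
    · rw [prodL_cons, prodL_cons, ← mul_assoc]
      congr 1
      exact map_mul (CoprodI.of (M := G A) (i := false)) a m
  | ⟨true, m⟩ :: L' =>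
    refine ⟨a, ⟨true, m⟩ :: L', haB, ⟨?_, ?_⟩, by rw [prodL_cons], Or.inl rfl⟩
    · intro l hl
      rcases List.mem_cons.1 hl with h | h
      · subst h; exact ha1
      · exact hR.1 _ h
    · unfold List.Chain'
      rw [List.isChain_cons]
      refine ⟨fun h hh => ?_, hR.2⟩
      have : h = ⟨true, m⟩ := by simpa [eq_comm] using hh
      subst this
      simp


lemma getLast?_cons_ne {α : Type*} (a : α) {l : List α} (h : l ≠ []) :
    (a :: l).getLast? = l.getLast? := by
  cases l with
  | nil => exact absurd rfl h
  | cons b t => exact List.getLast?_cons_cons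

lemma getLast?_tail_ne {α : Type*} {l : List α} (h : l.tail ≠ []) :
    l.tail.getLast? = l.getLast? := by
  cases l with
  | nil => rfl
  | cons a t =>
    rw [List.tail_cons] at h ⊢
    exact (getLast?_cons_ne a h).symm

lemma revInv_ne_nil {L : List (Letter A)} (h : L ≠ []) : revInv L ≠ [] := by
  simp [revInv, h]

lemma crux (a₀ : A) (h1 : a₀ ≠ 1) (hB : a₀ ∉ B) (x : Λ A) (hx : x ∈ HΛ B)
    (hxa : ∀ a : A, x ≠ CoprodI.of (M := G A) (i := false) a) :
    ∃ Z : List (Letter A), Red Z ∧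
      prodL Z = (CoprodI.of (M := G A) (i := false) a₀)⁻¹ * x *
        CoprodI.of (M := G A) (i := false) a₀ ∧
      (∃ b₁ : A, Z.head? = some ⟨false, b₁⟩ ∧ b₁ ∉ B) ∧
      (∃ b₂ : A, Z.getLast? = some ⟨false, b₂⟩) := by
  have hinv1 : a₀⁻¹ ≠ 1 := inv_ne_one.2 h1
  have hinvB : a₀⁻¹ ∉ B := fun h => hB (by simpa using inv_mem h)
  set L := (CoprodI.Word.equiv x).toList with hLdef
  have hRL : Red L := red_toList x
  have hgood : ∀ l ∈ L, goodL B l := (mem_HΛ_iff B).1 hx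
  have hpx : prodL L = x := prodL_toList x
  obtain ⟨b₁, T, hb₁, R1, P1, hT⟩ := leftMul a₀⁻¹ hinv1 hinvB L hRL
    (fun l hl => hgood l (List.mem_of_mem_head? hl))
  rw [map_inv, hpx] at P1
  have hTne : T ≠ [] := by
    intro h
    rcases hT with rfl | ⟨hTt, m, hm⟩
    · rw [h] at hpx
      exact hxa 1 (by rw [← hpx, prodL_nil, map_one])
    · have hLc : (⟨false, m⟩ : Letter A) :: L.tail = L := List.cons_head?_tail hm
      rw [hTt] at h
      rw [h] at hLc
      apply hxa m
      rw [← hpx, ← hLc, prodL_cons, prodL_nil, mul_one]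
  set L₁ : List (Letter A) := ⟨false, b₁⟩ :: T with hL₁
  set L₂ := revInv L₁ with hL₂
  have R2 : Red L₂ := red_revInv R1
  have P2 : prodL L₂ = x⁻¹ * CoprodI.of (M := G A) (i := false) a₀ := by
    rw [hL₂, prodL_revInv, P1, mul_inv_rev, inv_inv]
  have hlastT : ∃ lT, T.getLast? = some lT ∧ goodL B lT := by
    refine ⟨T.getLast hTne, List.getLast?_eq_getLast hTne, ?_⟩
    have hmem : T.getLast hTne ∈ T := List.getLast_mem hTne
    rcases hT with rfl | ⟨hTt, _⟩
    · exact hgood _ hmem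
    · exact hgood _ (List.mem_of_mem_tail (hTt ▸ hmem))
  obtain ⟨lT, hlT, hlTgood⟩ := hlastT
  have hlast₁ : L₁.getLast? = some lT := by
    rw [hL₁, getLast?_cons_ne _ hTne, hlT]
  have hhead₂ : L₂.head? = some (linv lT) := by
    rw [hL₂, revInv_head?, hlast₁, Option.map_some]
  obtain ⟨b₂, T₂, hb₂, R3, P3, hT₂⟩ := leftMul a₀⁻¹ hinv1 hinvB L₂ R2
    (fun l hl => by
      rw [hhead₂] at hl
      have : l = linv lT := by simpa [eq_comm] using hl
      subst this
      exact goodL_linv B hlTgood)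
  rw [map_inv, P2] at P3
  set L₃ : List (Letter A) := ⟨false, b₂⟩ :: T₂ with hL₃
  refine ⟨revInv L₃, red_revInv R3, ?_, ?_, ?_⟩
  · rw [prodL_revInv, P3]
    group
  · -- head of Z
    have hL₂ne : L₂ ≠ [] := revInv_ne_nil (by simp [hL₁])
    have hlen2 : 2 ≤ L₂.length := by
      have hlen : L₂.length = L₁.length := by simp [hL₂, revInv]
      rw [hlen, hL₁]
      simp only [List.length_cons]
      have : 1 ≤ T.length := List.length_pos_iff.2 hTne
      omega
    have hT₂ne : T₂ ≠ [] := by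
      rcases hT₂ with rfl | ⟨hTt, _⟩
      · exact hL₂ne
      · rw [hTt]
        intro htail
        have : L₂.length - 1 = 0 := by rw [← List.length_tail, htail]; rfl
        omega
    have hlast₃ : L₃.getLast? = some ⟨false, b₁⁻¹⟩ := by
      rw [hL₃, getLast?_cons_ne _ hT₂ne]
      have hgl₂ : L₂.getLast? = some ⟨false, b₁⁻¹⟩ := by
        rw [hL₂, revInv_getLast?, hL₁]
        rfl
      rcases hT₂ with rfl | ⟨hTt, _⟩
      · exact hgl₂
      · rw [hTt, getLast?_tail_ne (hTt ▸ hT₂ne)]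
        exact hgl₂
    refine ⟨b₁, ?_, hb₁⟩
    rw [revInv_head?, hlast₃, Option.map_some]
    simp [linv]
  · refine ⟨b₂⁻¹, ?_⟩
    rw [revInv_getLast?, hL₃]
    rfl


lemma of_mem_HΛ_false {a : A} (h : a ∈ B) :
    CoprodI.of (M := G A) (i := false) a ∈ HΛ B :=
  ⟨CoprodI.of (M := Fct ↥B F) (i := false) ⟨a, h⟩, ψ_of B _⟩

lemma of_mem_HΛ_true (f : F) : CoprodI.of (M := G A) (i := true) f ∈ HΛ B :=
  ⟨CoprodI.of (M := Fct ↥B F) (i := true) f, ψ_of B _⟩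

lemma core (g : Λ A) (hg : g ∉ HΛ B) :
    ∃ w : Λ A, ∀ x : Λ A, x ∈ HΛ B → g⁻¹ * x * g ∈ HΛ B →
      ∃ a : A, x = w * CoprodI.of (M := G A) (i := false) a * w⁻¹ := by
  suffices h : ∀ n : ℕ, ∀ g : Λ A, (CoprodI.Word.equiv g).toList.length = n → g ∉ HΛ B →
      ∃ w : Λ A, ∀ x : Λ A, x ∈ HΛ B → g⁻¹ * x * g ∈ HΛ B →
        ∃ a : A, x = w * CoprodI.of (M := G A) (i := false) a * w⁻¹ by
    exact h _ g rfl hg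
  intro n
  induction n using Nat.strong_induction_on with
  | _ n ih =>
  intro g hlen hg
  have hpg : prodL (CoprodI.Word.equiv g).toList = g := prodL_toList g
  have hRg := red_toList g
  cases hLeq : (CoprodI.Word.equiv g).toList with
  | nil =>
    exfalso
    apply hg
    rw [← hpg, hLeq, prodL_nil]
    exact one_mem _
  | cons l₁ L' =>
  rw [hLeq] at hpg hRg hlen
  simp only [List.length_cons] at hlen
  have hRL' : Red L' :=
    ⟨fun l hl => hRg.1 l (List.mem_cons_of_mem _ hl), (List.isChain_cons.1 hRg.2).2⟩
  have hg2eq : (CoprodI.Word.equiv (prodL L')).toList = L' := equiv_toList L' hRL'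
  have hsplit : g = CoprodI.of l₁.2 * prodL L' := by rw [← hpg, prodL_cons]
  have good_case : CoprodI.of l₁.2 ∈ HΛ B →
      ∃ w : Λ A, ∀ x : Λ A, x ∈ HΛ B → g⁻¹ * x * g ∈ HΛ B →
        ∃ a : A, x = w * CoprodI.of (M := G A) (i := false) a * w⁻¹ := by
    intro hmH
    set m : Λ A := CoprodI.of l₁.2 with hmdef
    have hg₂ : prodL L' ∉ HΛ B := fun h => hg (hsplit ▸ mul_mem hmH h)
    obtain ⟨w', hw'⟩ := ih L'.length (by omega) (prodL L') (by rw [hg2eq]) hg₂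
    refine ⟨m * w', ?_⟩
    intro x hx hconj
    have hx' : m⁻¹ * x * m ∈ HΛ B := mul_mem (mul_mem (inv_mem hmH) hx) hmH
    have hconj' : (prodL L')⁻¹ * (m⁻¹ * x * m) * prodL L' ∈ HΛ B := by
      have heq : (prodL L')⁻¹ * (m⁻¹ * x * m) * prodL L' = g⁻¹ * x * g := by
        rw [hsplit]; group
      rw [heq]; exact hconj
    obtain ⟨a, ha⟩ := hw' _ hx' hconj'
    refine ⟨a, ?_⟩
    have hxeq : x = m * (m⁻¹ * x * m) * m⁻¹ := by group
    rw [hxeq, ha]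
    group
  obtain ⟨b0, m⟩ := l₁
  cases b0 with
  | true => exact good_case (of_mem_HΛ_true m)
  | false =>
    by_cases hm : m ∈ B
    · exact good_case (of_mem_HΛ_false hm)
    · -- the interesting case
      have ha1 : m ≠ 1 := hRg.1 ⟨false, m⟩ (List.mem_cons_self)
      refine ⟨1, ?_⟩
      intro x hx hconj
      by_contra hno
      push_neg at hno
      have hxa : ∀ a : A, x ≠ CoprodI.of (M := G A) (i := false) a := by
        intro a h
        exact hno a (by rw [h]; group)
      obtain ⟨Z, RZ, PZ, ⟨b₁, hZh, hb₁⟩, ⟨b₂, hZl⟩⟩ := crux m ha1 hm x hx hxa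
      have hZne : Z ≠ [] := by
        intro h
        rw [h] at hZh
        simp at hZh
      have hheadL' : ∀ l ∈ L'.head?, l.1 = true := by
        intro l hl
        have hne := (List.isChain_cons.1 hRg.2).1 l hl
        simp only at hne
        cases hfst : l.1
        · exact absurd hfst.symm hne
        · rfl
      -- the big word
      set W : List (Letter A) := revInv L' ++ (Z ++ L') with hWdef
      have RW : Red W := by
        constructor
        · intro l hl
          rcases List.mem_append.1 hl with h | h
          · obtain ⟨l', hl', rfl⟩ := mem_revInv.1 h
            exact inv_ne_one.2 (hRL'.1 l' hl')
          · rcases List.mem_append.1 h with h' | h'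
            · exact RZ.1 l h'
            · exact hRL'.1 l h'
        · unfold List.Chain'
          rw [List.isChain_append]
          refine ⟨(red_revInv hRL').2, ?_, ?_⟩
          · rw [List.isChain_append]
            refine ⟨RZ.2, hRL'.2, ?_⟩
            intro p hp q hq
            rw [hZl] at hp
            have hp' : p = ⟨false, b₂⟩ := by simpa [eq_comm] using hp
            have hq' := hheadL' q hq
            rw [hp', hq']
            simp
          · intro p hp q hq
            rw [revInv_getLast?] at hp
            obtain ⟨l', hl', rfl⟩ : ∃ l' ∈ L'.head?, linv l' = p := by
              cases hh : L'.head? with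
              | none => rw [hh] at hp; simp at hp
              | some l' =>
                rw [hh] at hp
                exact ⟨l', by simp [hh], by simpa using hp⟩
            have hl'true := hheadL' l' hl'
            have hqZ : q = ⟨false, b₁⟩ := by
              have happ : (Z ++ L').head? = some ⟨false, b₁⟩ := by
                cases Z with
                | nil => exact absurd rfl hZne
                | cons z zs =>
                  rw [List.cons_append, List.head?_cons, ← hZh]
                  rfl
              rw [happ] at hq
              simpa [eq_comm] using hq
            rw [hqZ, linv_fst, hl'true]
            simp
      have hWeq : prodL W = g⁻¹ * x * g := by
        rw [hWdef, prodL_append, prodL_append, prodL_revInv, PZ, hsplit]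
        group
      have hWlist : (CoprodI.Word.equiv (g⁻¹ * x * g)).toList = W := by
        rw [← hWeq]
        exact equiv_toList _ RW
      have hgood := (mem_HΛ_iff B).1 hconj
      rw [hWlist] at hgood
      have hmem : (⟨false, b₁⟩ : Letter A) ∈ W := by
        have h1 : (⟨false, b₁⟩ : Letter A) ∈ Z := List.mem_of_mem_head? (by simp [hZh])
        exact List.mem_append.2 (Or.inr (List.mem_append.2 (Or.inl h1)))
      exact hb₁ (hgood _ hmem)


lemma HΛ_eq (B : Subgroup A) :
    HΛ B = Subgroup.closure
      ((CoprodI.of (M := G A) (i := false)) '' (B : Set A) ∪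
        {CoprodI.of (M := G A) (i := true) (FreeGroup.of ())}) := by
  apply le_antisymm
  · rintro x ⟨u, rfl⟩
    induction u using CoprodI.induction_on with
    | one => simpa using one_mem _
    | of i m =>
      rw [ψ_of]
      cases i with
      | false =>
        exact Subgroup.subset_closure (Or.inl ⟨m.1, m.2, rfl⟩)
      | true =>
        have h0 : CoprodI.of (M := G A) (i := true) (fmap B true m) ∈
            Subgroup.map (CoprodI.of (M := G A) (i := true)) ⊤ :=
          Subgroup.mem_map_of_mem _ trivial
        have h1 : (⊤ : Subgroup F) =
            Subgroup.closure (Set.range (FreeGroup.of : Unit → F)) :=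
          (FreeGroup.closure_range_of Unit).symm
        rw [h1, MonoidHom.map_closure] at h0
        have h2 : (CoprodI.of (M := G A) (i := true)) '' Set.range (FreeGroup.of : Unit → F) =
            {CoprodI.of (M := G A) (i := true) (FreeGroup.of ())} := by
          rw [Set.range_unique]
          exact Set.image_singleton
        rw [h2] at h0
        exact Subgroup.closure_mono Set.subset_union_right h0
    | mul x y hx hy =>
      rw [map_mul]
      exact mul_mem hx hy
  · rw [Subgroup.closure_le]
    rintro x (⟨a, ha, rfl⟩ | hx)
    · exact of_mem_HΛ_false ha
    · rw [Set.mem_singleton_iff] at hx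
      subst hx
      exact of_mem_HΛ_true _

lemma map_H_eq (B : Subgroup A) :
    Subgroup.map (coprodEquivCoprodI : Coprod A F ≃* Λ A).toMonoidHom
      (Subgroup.closure ((Coprod.inl : A →* Coprod A F) '' (B : Set A) ∪
        {Coprod.inr (FreeGroup.of ())})) = HΛ B := by
  rw [MonoidHom.map_closure, HΛ_eq]
  congr 1
  rw [Set.image_union, Set.image_singleton]
  have h1 : (⇑(coprodEquivCoprodI : Coprod A F ≃* Λ A).toMonoidHom) ''
      ((Coprod.inl : A →* Coprod A F) '' (B : Set A)) =
      (CoprodI.of (M := G A) (i := false)) '' (B : Set A) := by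
    rw [← Set.image_comp]
    apply Set.image_congr
    intro a _
    exact coprodEquivCoprodI_inl a
  have h2 : (coprodEquivCoprodI : Coprod A F ≃* Λ A).toMonoidHom
      (Coprod.inr (FreeGroup.of ())) =
      CoprodI.of (M := G A) (i := true) (FreeGroup.of ()) :=
    coprodEquivCoprodI_inr _
  rw [h1, h2]

end Core
end AMN

open AMN in
/-- Let `A` be a finite group and `B ≤ A`.  In the free product `Γ = A * ⟨t⟩`
(with `⟨t⟩` infinite cyclic, realized as the free group on one generator), the
subgroup `H = ⟨B, t⟩` is isomorphic to `B * ⟨t⟩` and is almost malnormal in `Γ`. -/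
theorem subgroup_of_free_product_almost_malnormal (A : Type) [Group A] [Finite A]
    (B : Subgroup A) :
    let Γ := Coprod A (FreeGroup Unit)
    let t : Γ := Coprod.inr (FreeGroup.of ())
    let H : Subgroup Γ :=
      Subgroup.closure ((Coprod.inl : A →* Γ) '' (B : Set A) ∪ {t})
    Nonempty (H ≃* Coprod B (FreeGroup Unit)) ∧
      ∀ γ : Γ, γ ∉ H → {x : Γ | x ∈ H ∧ γ⁻¹ * x * γ ∈ H}.Finite := by
  intro Γ t H
  have hmap : Subgroup.map (coprodEquivCoprodI : Coprod A F ≃* Λ A).toMonoidHom H = HΛ B :=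
    map_H_eq B
  constructor
  · -- the isomorphism
    refine ⟨?_⟩
    have e₁ : H ≃* Subgroup.map (coprodEquivCoprodI : Coprod A F ≃* Λ A).toMonoidHom H :=
      Subgroup.equivMapOfInjective H _ (coprodEquivCoprodI.injective)
    have e₂ : Subgroup.map (coprodEquivCoprodI : Coprod A F ≃* Λ A).toMonoidHom H ≃* HΛ B :=
      MulEquiv.subgroupCongr hmap
    have e₃ : (HΛ B : Subgroup (Λ A)) ≃* Λ ↥B :=
      (MonoidHom.ofInjective (ψ_injective B)).symm
    have e₄ : Λ ↥B ≃* Coprod ↥B F := (coprodEquivCoprodI : Coprod ↥B F ≃* Λ ↥B).symm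
    exact ((e₁.trans e₂).trans e₃).trans e₄
  · -- almost malnormality
    intro γ hγ
    set e := (coprodEquivCoprodI : Coprod A F ≃* Λ A) with hedef
    have hgH : e γ ∉ HΛ B := by
      intro hmem
      rw [← hmap] at hmem
      obtain ⟨y, hy, hye⟩ := Subgroup.mem_map.1 hmem
      exact hγ (e.injective hye ▸ hy)
    obtain ⟨w, hw⟩ := core (e γ) hgH
    apply Set.Finite.subset
      (Set.Finite.preimage e.injective.injOn
        ((Set.finite_univ (α := A)).image
          (fun a => w * CoprodI.of (M := G A) (i := false) a * w⁻¹)))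
    rintro x ⟨hx, hconj⟩
    have hex : e x ∈ HΛ B := by
      rw [← hmap]
      exact Subgroup.mem_map_of_mem _ hx
    have hconj' : (e γ)⁻¹ * e x * e γ ∈ HΛ B := by
      have : (e γ)⁻¹ * e x * e γ = e (γ⁻¹ * x * γ) := by
        rw [map_mul, map_mul, map_inv]
      rw [this, ← hmap]
      exact Subgroup.mem_map_of_mem _ hconj
    obtain ⟨a, ha⟩ := hw (e x) hex hconj'
    exact ⟨a, Set.mem_univ a, ha.symm⟩
end

section
/- Let G = ⟨A | R⟩ be a finitely presented group and let G₁ = (G * F(b₀,...,b_m)) / ⟨⟨ b_i⁻¹ w b_i = a_i : i = 0,...,m ⟩⟩, where A = {a₀,...,a_m} and w ∈ F(A). If w has trivial image in every finite quotient of G, then every homomorphism from G₁ to a finite group kills the image of G; consequently every finite quotient of G₁ factors through the retraction of G₁ onto the free group F₀ = ⟨b₀,...,b_m⟩, and the inclusion F₀ ↪ G₁ induces an isomorphism of profinite completions. -/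
open Monoid

/-- Let `G` be a group generated by `a₀, ..., a_m`, let `w ∈ G`, and let
`G₁ = (G * F(b₀,...,b_m)) / ⟨⟨ bᵢ⁻¹ w bᵢ = aᵢ ⟩⟩`.  If `w` has trivial image in
every finite quotient of `G`, then every homomorphism from `G₁` to a finite group
kills the image of `G`; consequently there is a retraction `ρ` of `G₁` onto the
free subgroup `F₀ = ⟨b₀,...,b_m⟩` through which every finite quotient of `G₁`
factors, so the inclusion `F₀ ↪ G₁` induces an isomorphism of profinite
completions. -/
theorem finite_quotients_factor_through_free_retraction
    (G : Type) [Group G] (m : ℕ) (a : Fin (m + 1) → G)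
    (hgen : Subgroup.closure (Set.range a) = ⊤) (w : G)
    (hw : ∀ (Q : Type) (_ : Group Q) (_ : Finite Q) (f : G →* Q), f w = 1) :
    let L := Coprod G (FreeGroup (Fin (m + 1)))
    let b : Fin (m + 1) → L := fun i => Coprod.inr (FreeGroup.of i)
    let N : Subgroup L := Subgroup.normalClosure
      {x : L | ∃ i : Fin (m + 1),
        x = (b i)⁻¹ * Coprod.inl w * b i * (Coprod.inl (a i))⁻¹}
    let ι : G →* L ⧸ N := (QuotientGroup.mk' N).comp Coprod.inl
    let j : FreeGroup (Fin (m + 1)) →* L ⧸ N := (QuotientGroup.mk' N).comp Coprod.inr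
    (∀ (Q : Type) (_ : Group Q) (_ : Finite Q) (f : L ⧸ N →* Q) (x : G), f (ι x) = 1) ∧
    ∃ ρ : L ⧸ N →* FreeGroup (Fin (m + 1)),
      (∀ y : FreeGroup (Fin (m + 1)), ρ (j y) = y) ∧
      (∀ x : G, ρ (ι x) = 1) ∧
      (∀ (Q : Type) (_ : Group Q) (_ : Finite Q) (f : L ⧸ N →* Q),
        ∃ g : FreeGroup (Fin (m + 1)) →* Q, f = g.comp ρ) := by
  intro L b N ι j
  -- the defining relations hold in the quotient
  have hrel : ∀ i : Fin (m + 1),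
      (j (FreeGroup.of i))⁻¹ * ι w * j (FreeGroup.of i) = ι (a i) := by
    intro i
    have hmem : (b i)⁻¹ * Coprod.inl w * b i * (Coprod.inl (a i))⁻¹ ∈ N :=
      Subgroup.subset_normalClosure ⟨i, rfl⟩
    have h1 : (QuotientGroup.mk' N) ((b i)⁻¹ * Coprod.inl w * b i * (Coprod.inl (a i))⁻¹) = 1 :=
      (QuotientGroup.eq_one_iff _).2 hmem
    simp only [map_mul, map_inv] at h1
    erw [map_inv, map_inv] at h1
    have h2 := mul_inv_eq_one.mp h1
    show ((QuotientGroup.mk' N) (b i))⁻¹ * (QuotientGroup.mk' N) (Coprod.inl w) *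
        (QuotientGroup.mk' N) (b i) = (QuotientGroup.mk' N) (Coprod.inl (a i))
    exact h2
  -- Part 1
  have part1 : ∀ (Q : Type) (_ : Group Q) (_ : Finite Q) (f : L ⧸ N →* Q) (x : G),
      f (ι x) = 1 := by
    intro Q iQ fQ f x
    have hwQ : f (ι w) = 1 := hw Q iQ fQ (f.comp ι)
    have ha : ∀ i, f (ι (a i)) = 1 := by
      intro i
      rw [← hrel i]
      simp [hwQ]
    have hsub : Set.range a ⊆ ((f.comp ι).ker : Set G) := by
      rintro _ ⟨i, rfl⟩; exact ha i
    have htop : (⊤ : Subgroup G) ≤ (f.comp ι).ker := by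
      rw [← hgen]; exact (Subgroup.closure_le _).2 hsub
    exact htop (Subgroup.mem_top x)
  refine ⟨part1, ?_⟩
  -- the retraction
  let ρ₀ : L →* FreeGroup (Fin (m + 1)) := Coprod.lift 1 (MonoidHom.id _)
  have hρ₀N : N ≤ ρ₀.ker := by
    apply Subgroup.normalClosure_le_normal
    rintro x ⟨i, rfl⟩
    simp only [SetLike.mem_coe, MonoidHom.mem_ker, map_mul, map_inv]
    have h1 : ρ₀ (Coprod.inl w) = 1 := by
      rw [show Coprod.inl w = (Coprod.inl w : L) from rfl, Coprod.lift_apply_inl]; rfl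
    have h2 : ρ₀ (Coprod.inl (a i)) = 1 := by
      rw [Coprod.lift_apply_inl]; rfl
    erw [map_inv, map_inv, h2]; group
  let ρ : L ⧸ N →* FreeGroup (Fin (m + 1)) := QuotientGroup.lift N ρ₀ hρ₀N
  have hρj : ∀ y, ρ (j y) = y := by
    intro y
    show ρ₀ (Coprod.inr y) = y
    rw [show ρ₀ (Coprod.inr y) = Coprod.lift 1 (MonoidHom.id _) (Coprod.inr y) from rfl,
      Coprod.lift_apply_inr]; rfl
  have hρι : ∀ x : G, ρ (ι x) = 1 := by
    intro x
    show ρ₀ (Coprod.inl x) = 1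
    rw [show ρ₀ (Coprod.inl x) = Coprod.lift 1 (MonoidHom.id _) (Coprod.inl x) from rfl,
      Coprod.lift_apply_inl]; rfl
  refine ⟨ρ, hρj, hρι, ?_⟩
  intro Q iQ fQ f
  refine ⟨f.comp j, ?_⟩
  have key : (f.comp (QuotientGroup.mk' N))
      = (((f.comp j).comp ρ).comp (QuotientGroup.mk' N)) := by
    apply Coprod.hom_ext
    · ext x
      simp only [MonoidHom.comp_apply]
      rw [show (QuotientGroup.mk' N) (Coprod.inl x) = ι x from rfl]
      rw [part1 Q iQ fQ f x, hρι x, map_one, map_one]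
    · ext y
      simp only [MonoidHom.comp_apply]
      rw [show (QuotientGroup.mk' N) (Coprod.inr (FreeGroup.of y)) = j (FreeGroup.of y) from rfl]
      rw [hρj]
  apply MonoidHom.ext
  intro x
  obtain ⟨x, rfl⟩ := QuotientGroup.mk'_surjective N x
  exact DFunLike.congr_fun key x
end

section
/- Let Γ be a group fitting in a short exact sequence 1 → N → Γ → G → 1 where N has property (T) (it suffices to assume: every finite-index subgroup of N has finite abelianization). If some finite-index subgroup K ≤ Γ surjects onto Z, then some finite-index subgroup of G surjects onto Z; i.e., vb₁(Γ) > 0 implies vb₁(G) > 0. -/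
/-- Let `1 → N → Γ → G → 1` with every finite-index subgroup of `N` having finite
abelianization (e.g. `N` has property (T)).  If some finite-index subgroup of `Γ`
surjects onto `ℤ`, then some finite-index subgroup of `G = Γ/N` surjects onto `ℤ`;
i.e. `vb₁(Γ) > 0` implies `vb₁(G) > 0`. -/
theorem vb1_quotient_pos_of_vb1_pos
    (Γ : Type) [Group Γ] (N : Subgroup Γ) [N.Normal]
    (hT : ∀ M : Subgroup N, M.FiniteIndex → Finite (Abelianization M))
    (hΓ : ∃ K : Subgroup Γ, K.FiniteIndex ∧
      ∃ f : K →* Multiplicative ℤ, Function.Surjective f) :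
    ∃ K' : Subgroup (Γ ⧸ N), K'.FiniteIndex ∧
      ∃ g : K' →* Multiplicative ℤ, Function.Surjective g := by
  obtain ⟨K, hK, f, hf⟩ := hΓ
  -- `M = K ∩ N` as a subgroup of `N`, of finite index in `N`
  set M : Subgroup N := K.subgroupOf N with hM
  have hMfi : M.FiniteIndex := by
    constructor
    intro h0
    exact hK.index_ne_zero (Subgroup.index_eq_zero_of_relIndex_eq_zero h0)
  have hMab : Finite (Abelianization M) := hT M hMfi
  -- the inclusion `M →* K`
  let e : M →* K :=
    { toFun := fun m => ⟨(m : N), m.2⟩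
      map_one' := rfl
      map_mul' := fun _ _ => rfl }
  let ψ : M →* Multiplicative ℤ := f.comp e
  -- `f` kills every element of `K` lying in `N`
  have hkill : ∀ k : K, (k : Γ) ∈ N → f k = 1 := by
    intro k hkN
    set m : M := ⟨⟨(k : Γ), hkN⟩, k.2⟩ with hm
    have hfm : f k = ψ m := by
      simp only [ψ, MonoidHom.comp_apply]
      congr 1
    rw [hfm]
    have hψ : ψ m = (Abelianization.lift ψ) (Abelianization.of m) :=
      (Abelianization.lift_apply_of ψ m).symm
    have hn : orderOf (Abelianization.of m) ≠ 0 := (orderOf_pos _).ne'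
    have hpow : ψ m ^ orderOf (Abelianization.of m) = 1 := by
      rw [hψ, ← map_pow, pow_orderOf_eq_one, map_one]
    -- in `Multiplicative ℤ`, torsion elements are trivial
    have := congrArg Multiplicative.toAdd hpow
    rw [toAdd_pow] at this
    have : Multiplicative.toAdd (ψ m) = 0 := by
      rcases smul_eq_zero.mp this with h | h
      · exact absurd (by exact_mod_cast h) hn
      · exact h
    exact Multiplicative.toAdd.injective this
  -- the image of `K` in `Γ ⧸ N`
  let π : Γ →* Γ ⧸ N := QuotientGroup.mk' N
  let φ : K →* Γ ⧸ N := π.comp K.subtype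
  refine ⟨φ.range, ?_, ?_⟩
  · -- finite index: `φ.range = K.map π` and the index divides that of `K`
    have hrange : φ.range = K.map π := by
      rw [MonoidHom.range_comp, Subgroup.range_subtype]
    constructor
    intro h0
    have hdvd : (K.map π).index ∣ K.index :=
      Subgroup.index_map_dvd K (QuotientGroup.mk'_surjective N)
    rw [hrange] at h0
    rw [h0] at hdvd
    exact hK.index_ne_zero (zero_dvd_iff.mp hdvd)
  · -- build `g` by factoring `f` through `K ⧸ ker φ ≃* φ.range`
    have hker : ∀ k : K, k ∈ φ.rangeRestrict.ker → f k = 1 := by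
      intro k hk
      rw [MonoidHom.ker_rangeRestrict] at hk
      exact hkill k ((QuotientGroup.eq_one_iff _).mp hk)
    let e' : K ⧸ φ.rangeRestrict.ker ≃* φ.range :=
      QuotientGroup.quotientKerEquivOfSurjective _ φ.rangeRestrict_surjective
    refine ⟨(QuotientGroup.lift _ f hker).comp e'.symm.toMonoidHom, ?_⟩
    have hlift : Function.Surjective (QuotientGroup.lift _ f hker) := by
      intro z
      obtain ⟨k, hk⟩ := hf z
      exact ⟨QuotientGroup.mk k, hk⟩
    exact hlift.comp e'.symm.surjective
end
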